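/- Inverse transformation of the scaled system back to the original system: let ρ, D, f, c > 0 be constants and let p̃, ṽ : [0, L] × [0, r] → ℝ be functions such that for each k = 1, …, r and all l ∈ [0, L], s ∈ (k−1, k): ∂ṽ/∂s + θᵏ (1/ρ) ∂p̃/∂l + θᵏ f ṽ|ṽ|/(2D) = 0 and ∂p̃/∂s + θᵏ ρ c² ∂ṽ/∂l = 0, with p̃, ṽ of class C¹. Define p(l, t) = p̃(l, ψ⁻¹(t)) and v(l, t) = ṽ(l, ψ⁻¹(t)). Then for each k and all l ∈ [0, L], t ∈ (t_{k−1}, t_k): ∂v/∂t + (1/ρ) ∂p/∂l + f v|v|/(2D) = 0 and ∂p/∂t + ρ c² ∂v/∂l = 0. -/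

import Mathlib

/-- Inverse transformation of the scaled system back to the original system:
if p̃, ṽ satisfy the time-scaled Saint-Venant equations on each (k−1, k), then
p(l,t) = p̃(l,ψ⁻¹(t)), v(l,t) = ṽ(l,ψ⁻¹(t)) satisfy the original Saint-Venant
equations on each (t_{k−1}, t_k). -/
theorem stmt_18 (r : ℕ) (hr : 0 < r) (T L : ℝ) (hT : 0 < T) (hL : 0 < L)
    (ρ D f c : ℝ) (hρ : 0 < ρ) (hD : 0 < D) (hf : 0 < f) (hc : 0 < c)
    (θ : ℕ → ℝ) (hθpos : ∀ k, 1 ≤ k → k ≤ r → 0 < θ k)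
    (hθsum : ∑ i ∈ Finset.range r, θ (i + 1) = T)
    (ψ : ℝ → ℝ)
    (hψ : ∀ s : ℝ, 0 ≤ s → s < r →
      ψ s = (∑ i ∈ Finset.range ⌊s⌋₊, θ (i + 1)) + θ (⌊s⌋₊ + 1) * (s - ⌊s⌋₊))
    (hψr : ψ r = T)
    (φ : ℝ → ℝ)  -- the inverse bijection ψ⁻¹ : [0, T] → [0, r]
    (hφψ : ∀ s ∈ Set.Icc (0 : ℝ) (r : ℝ), φ (ψ s) = s)
    (hψφ : ∀ x ∈ Set.Icc (0 : ℝ) T, ψ (φ x) = x)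
    (pt vt ps vs pl vl : ℝ → ℝ → ℝ)
    -- p̃, ṽ are C¹: ps, vs are the derivatives in s, pl, vl the derivatives in l
    (hvs : ∀ l ∈ Set.Icc (0 : ℝ) L, ∀ s ∈ Set.Icc (0 : ℝ) (r : ℝ),
      HasDerivAt (fun σ => vt l σ) (vs l s) s)
    (hps : ∀ l ∈ Set.Icc (0 : ℝ) L, ∀ s ∈ Set.Icc (0 : ℝ) (r : ℝ),
      HasDerivAt (fun σ => pt l σ) (ps l s) s)
    (hpl : ∀ l ∈ Set.Icc (0 : ℝ) L, ∀ s ∈ Set.Icc (0 : ℝ) (r : ℝ),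
      HasDerivAt (fun x => pt x s) (pl l s) l)
    (hvl : ∀ l ∈ Set.Icc (0 : ℝ) L, ∀ s ∈ Set.Icc (0 : ℝ) (r : ℝ),
      HasDerivAt (fun x => vt x s) (vl l s) l)
    -- the time-scaled Saint-Venant equations
    (hpde₁ : ∀ k : ℕ, 1 ≤ k → k ≤ r → ∀ l ∈ Set.Icc (0 : ℝ) L,
      ∀ s ∈ Set.Ioo ((k : ℝ) - 1) (k : ℝ),
        vs l s + θ k * (1 / ρ) * pl l s + θ k * (f * vt l s * |vt l s| / (2 * D)) = 0)
    (hpde₂ : ∀ k : ℕ, 1 ≤ k → k ≤ r → ∀ l ∈ Set.Icc (0 : ℝ) L,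
      ∀ s ∈ Set.Ioo ((k : ℝ) - 1) (k : ℝ),
        ps l s + θ k * (ρ * c ^ 2 * vl l s) = 0) :
    ∀ k : ℕ, 1 ≤ k → k ≤ r → ∀ l ∈ Set.Icc (0 : ℝ) L,
      ∀ t ∈ Set.Ioo (∑ i ∈ Finset.range (k - 1), θ (i + 1))
          (∑ i ∈ Finset.range k, θ (i + 1)),
        HasDerivAt (fun τ => vt l (φ τ))
          (-((1 / ρ) * pl l (φ t) + f * vt l (φ t) * |vt l (φ t)| / (2 * D))) t ∧
        HasDerivAt (fun τ => pt l (φ τ))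
          (-(ρ * c ^ 2 * vl l (φ t))) t := by

  intro k hk1 hkr l hl t ht
  set Sk1 := ∑ i ∈ Finset.range (k - 1), θ (i + 1) with hSk1
  have hksucc : k = (k - 1) + 1 := (Nat.succ_pred_eq_of_pos hk1).symm
  have hsum : ∑ i ∈ Finset.range k, θ (i + 1) = Sk1 + θ k := by
    conv_lhs => rw [hksucc, Finset.sum_range_succ]
    rw [← hksucc]
  have hθk : 0 < θ k := hθpos k hk1 hkr
  obtain ⟨ht1, ht2⟩ := ht
  rw [hsum] at ht2
  have hcast : ((k - 1 : ℕ) : ℝ) = (k : ℝ) - 1 := by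
    rw [Nat.cast_sub hk1]; norm_num
  set g : ℝ → ℝ := fun τ => ((k : ℝ) - 1) + (τ - Sk1) / θ k with hgdef
  have hkr' : (k : ℝ) ≤ (r : ℝ) := Nat.cast_le.mpr hkr
  have hk1' : (1 : ℝ) ≤ (k : ℝ) := by exact_mod_cast hk1
  -- φ = g on the open interval
  have hφg : ∀ τ ∈ Set.Ioo Sk1 (Sk1 + θ k), φ τ = g τ := by
    intro τ hτ
    obtain ⟨hτ1, hτ2⟩ := hτ
    have hgl : (k : ℝ) - 1 < g τ := by
      have : 0 < (τ - Sk1) / θ k := div_pos (by linarith) hθk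
      simp only [hgdef]; linarith
    have hgu : g τ < k := by
      have : (τ - Sk1) / θ k < 1 := (div_lt_one hθk).mpr (by linarith)
      simp only [hgdef]; linarith
    have hg0 : 0 ≤ g τ := by linarith
    have hglt : g τ < r := lt_of_lt_of_le hgu hkr'
    have hfloor : ⌊g τ⌋₊ = k - 1 := by
      rw [Nat.floor_eq_iff hg0]
      constructor
      · rw [hcast]; linarith
      · rw [hcast]; push_cast; linarith
    have hψg : ψ (g τ) = τ := by
      rw [hψ (g τ) hg0 hglt, hfloor, ← hksucc, hcast, ← hSk1]
      have : g τ - ((k : ℝ) - 1) = (τ - Sk1) / θ k := by simp [hgdef]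
      rw [this]
      field_simp
      ring
    have : φ (ψ (g τ)) = g τ :=
      hφψ (g τ) ⟨hg0, le_of_lt hglt⟩
    rw [hψg] at this
    exact this
  have hmem : Set.Ioo Sk1 (Sk1 + θ k) ∈ nhds t := Ioo_mem_nhds ht1 ht2
  have hφt : φ t = g t := hφg t ⟨ht1, ht2⟩
  have hgderiv : HasDerivAt g (1 / θ k) t := by
    have h1 : HasDerivAt (fun τ : ℝ => (τ - Sk1) / θ k) (1 / θ k) t :=
      ((hasDerivAt_id t).sub_const Sk1).div_const (θ k)
    simpa [hgdef] using h1.const_add ((k : ℝ) - 1)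
  have hgt_mem : g t ∈ Set.Ioo ((k : ℝ) - 1) (k : ℝ) := by
    constructor
    · have : 0 < (t - Sk1) / θ k := div_pos (by linarith) hθk
      simp only [hgdef]; linarith
    · have : (t - Sk1) / θ k < 1 := (div_lt_one hθk).mpr (by linarith)
      simp only [hgdef]; linarith
  have hgt_Icc : g t ∈ Set.Icc (0 : ℝ) (r : ℝ) := by
    obtain ⟨h1, h2⟩ := hgt_mem
    exact ⟨by linarith, le_of_lt (lt_of_lt_of_le h2 hkr')⟩
  have heq_v : (fun τ => vt l (φ τ)) =ᶠ[nhds t] (fun τ => vt l (g τ)) :=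
    Filter.eventually_of_mem hmem (fun τ hτ => by show vt l (φ τ) = vt l (g τ); rw [hφg τ hτ])
  have heq_p : (fun τ => pt l (φ τ)) =ᶠ[nhds t] (fun τ => pt l (g τ)) :=
    Filter.eventually_of_mem hmem (fun τ hτ => by show pt l (φ τ) = pt l (g τ); rw [hφg τ hτ])
  have hvcomp : HasDerivAt (fun τ => vt l (g τ)) (vs l (g t) * (1 / θ k)) t :=
    (hvs l hl (g t) hgt_Icc).comp t hgderiv
  have hpcomp : HasDerivAt (fun τ => pt l (g τ)) (ps l (g t) * (1 / θ k)) t :=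
    (hps l hl (g t) hgt_Icc).comp t hgderiv
  have e1 := hpde₁ k hk1 hkr l hl (g t) hgt_mem
  have e2 := hpde₂ k hk1 hkr l hl (g t) hgt_mem
  have hθne : θ k ≠ 0 := ne_of_gt hθk
  constructor
  · have hval : vs l (g t) * (1 / θ k)
        = -((1 / ρ) * pl l (g t) + f * vt l (g t) * |vt l (g t)| / (2 * D)) := by
      field_simp at e1 ⊢
      nlinarith [e1]
    rw [hφt]
    exact (hval ▸ hvcomp).congr_of_eventuallyEq heq_v
  · have hval : ps l (g t) * (1 / θ k) = -(ρ * c ^ 2 * vl l (g t)) := by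
      field_simp
      nlinarith [e2]
    rw [hφt]
    exact (hval ▸ hpcomp).congr_of_eventuallyEq heq_p
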